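/- arXiv:math/0012256 — 3 statements merged into one kernel-verified Lean document; each statement's English description precedes it below -/
import Mathlib

section
/- Under the map τ# sending a differential k-form w = w_{i₁…i_k} dx^{i₁}∧…∧dx^{i_k} on M to the element of R[x]⊗Λ(θ₁,…,θₙ) given by the Berezin integral ∫ w(x,ξ) exp(θᵢξⁱ) dⁿξ (where w(x,ξ) = w_{i₁…i_k} ξ^{i₁}⋯ξ^{i_k}), the exterior differential corresponds to Δ₀: Δ₀(τ# w) = τ#(dw), where Δ₀ = Σᵢ ∂²/∂xⁱ∂θᵢ. -/
open scoped BigOperators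

noncomputable section

namespace OddSymp

variable (R : Type*) [CommRing R] (n : ℕ)

/-- The superalgebra `A = R[x¹,…,xⁿ] ⊗ Λ(θ₁,…,θₙ)`, represented by its coefficient
functions: the value at a finset `S ⊆ {1,…,n}` is the coefficient (a polynomial in
the even variables `x`) of the monomial `θ_S` (product in increasing order). -/
abbrev SAlg := Finset (Fin n) → MvPolynomial (Fin n) R

variable {R n}

/-- Koszul sign arising when multiplying `θ_S · θ_T` (for disjoint `S`, `T`). -/
def eps (S T : Finset (Fin n)) : ℤ :=
  (-1 : ℤ) ^ ((S ×ˢ T).filter (fun p => p.2 < p.1)).card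

/-- The supercommutative product on `A`. -/
def mul (f g : SAlg R n) : SAlg R n := fun U =>
  ∑ S ∈ U.powerset, eps S (U \ S) • (f S * g (U \ S))

/-- The unit of `A`. -/
def one : SAlg R n := fun S => if S = ∅ then 1 else 0

/-- The odd generator `θ_i`. -/
def theta (i : Fin n) : SAlg R n := fun S => if S = {i} then 1 else 0

/-- The even partial derivative `∂/∂xⁱ`. -/
def pdx (i : Fin n) (f : SAlg R n) : SAlg R n := fun S => MvPolynomial.pderiv i (f S)

/-- The left odd partial derivative `∂/∂θᵢ`. -/
def pdθ (i : Fin n) (f : SAlg R n) : SAlg R n := fun T =>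
  if i ∈ T then 0
  else ((-1 : ℤ) ^ ((T.filter (fun j => j < i)).card)) • f (insert i T)

/-- The canonical Batalin–Vilkovisky operator `Δ₀ = Σᵢ ∂²/∂xⁱ∂θᵢ` in Darboux
coordinates. -/
def delta0 (f : SAlg R n) : SAlg R n := ∑ i : Fin n, pdx i (pdθ i f)

/-- The canonical odd Poisson (Buttin) bracket
`{f,g} = Σᵢ (∂f/∂xⁱ ∂g/∂θᵢ + (−1)^{p(f)} ∂f/∂θᵢ ∂g/∂xⁱ)`, where `p` is the parity
of (the homogeneous element) `f`, passed as the parameter `p`. -/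
def bracket (p : ℕ) (f g : SAlg R n) : SAlg R n :=
  ∑ i : Fin n,
    (mul (pdx i f) (pdθ i g) + ((-1 : ℤ) ^ p) • mul (pdθ i f) (pdx i g))

/-- `f` is ℤ/2-homogeneous of parity `p`. -/
def IsHomog (f : SAlg R n) (p : ℕ) : Prop := ∀ S, f S ≠ 0 → S.card % 2 = p % 2

/-- `f` is homogeneous of degree `d` in the odd variables `θ`. -/
def ThetaHomog (f : SAlg R n) (d : ℕ) : Prop := ∀ S, f S ≠ 0 → S.card = d

end OddSymp

end

open OddSymp

noncomputable section

/-- The odd Fourier transform `τ#` sending (the coefficient function of) a differential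
form `w(x,ξ)` on `ℝⁿ` to the semidensity coefficient `∫ w(x,ξ) exp(θᵢξⁱ) dⁿξ`:
the Berezin integral turns the coefficient of `ξ_S` into a coefficient of `θ_{Sᶜ}`
with the Koszul sign `(−1)^{Σ_{j∈Sᶜ} j}` (0-based indices). -/
def tau {R : Type*} [CommRing R] {n : ℕ} (w : SAlg R n) : SAlg R n :=
  fun T => ((-1 : ℤ) ^ (∑ j ∈ Tᶜ, (j : ℕ))) • w Tᶜ

/-- The exterior differential `d = Σᵢ ξⁱ ∂/∂xⁱ` on differential forms, in the odd
tangent bundle model (forms are polynomials in odd variables `ξ`, here encoded by the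
same coefficient model `SAlg`). -/
def dext {R : Type*} [CommRing R] {n : ℕ} (w : SAlg R n) : SAlg R n :=
  ∑ i : Fin n, mul (theta i) (pdx i w)

lemma eps_singleton {n : ℕ} (i : Fin n) (T : Finset (Fin n)) :
    eps ({i} : Finset (Fin n)) T = (-1 : ℤ) ^ ((T.filter (· < i)).card) := by
  unfold eps
  congr 1
  rw [Finset.singleton_product, Finset.filter_map, Finset.card_map]
  rfl

lemma mul_theta {R : Type*} [CommRing R] {n : ℕ} (i : Fin n) (g : SAlg R n)
    (U : Finset (Fin n)) :
    mul (theta i) g U =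
      if i ∈ U then eps {i} (U \ {i}) • g (U \ {i}) else 0 := by
  unfold mul theta
  have key : ∀ S ∈ U.powerset,
      eps S (U \ S) • ((if S = ({i} : Finset (Fin n)) then (1 : MvPolynomial (Fin n) R) else 0) * g (U \ S)) =
        if S = ({i} : Finset (Fin n)) then eps S (U \ S) • g (U \ S) else 0 := by
    intro S _
    split <;> simp
  rw [Finset.sum_congr rfl key, Finset.sum_ite_eq' U.powerset ({i} : Finset (Fin n))]
  simp [Finset.mem_powerset, Finset.singleton_subset_iff]

/-- under `τ#` the exterior differential corresponds to `Δ₀`: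
`Δ₀(τ# w) = τ#(dw)`. -/
theorem stmt11 {R : Type*} [CommRing R] {n : ℕ} (w : SAlg R n) :
    delta0 (tau w) = tau (dext w) := by
  funext U
  show (delta0 (tau w)) U = _
  unfold delta0 tau dext
  simp only [Finset.sum_apply, Finset.smul_sum]
  refine Finset.sum_congr rfl fun i _ => ?_
  rw [mul_theta]
  by_cases h : i ∈ U
  · have h' : i ∉ Uᶜ := by simp [h]
    simp [pdx, pdθ, h, h']
  · have h' : i ∈ Uᶜ := by simp [h]
    simp only [pdx, pdθ]
    rw [if_neg h, if_pos h']
    have hV : (insert i U)ᶜ = Uᶜ.erase i := Finset.compl_insert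
    have hsd : Uᶜ \ {i} = Uᶜ.erase i := by
      rw [Finset.sdiff_singleton_eq_erase]
    rw [hV, hsd, eps_singleton]
    -- now everything is pderiv of smuls of w (Uᶜ.erase i)
    set a : ℕ := (U.filter (· < i)).card with ha
    set b : ℕ := ∑ j ∈ Uᶜ.erase i, (j : ℕ) with hb
    set c : ℕ := ∑ j ∈ Uᶜ, (j : ℕ) with hc
    set d : ℕ := ((Uᶜ.erase i).filter (· < i)).card with hd
    have hcb : c = i + b := by
      rw [hc, hb, ← Finset.add_sum_erase _ _ h']
    have had : a + d = (i : ℕ) := by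
      have h1 : (Uᶜ.erase i).filter (· < i) = Uᶜ.filter (· < i) := by
        ext x
        simp only [Finset.mem_filter, Finset.mem_erase]
        exact ⟨fun ⟨⟨_, h2⟩, h3⟩ => ⟨h2, h3⟩, fun ⟨h2, h3⟩ => ⟨⟨ne_of_lt h3, h2⟩, h3⟩⟩
      have h2 : (U.filter (· < i)) ∪ (Uᶜ.filter (· < i)) =
          Finset.univ.filter (· < i) := by
        rw [← Finset.filter_union, Finset.union_compl]
      have h3 : Disjoint (U.filter (· < i)) (Uᶜ.filter (· < i)) :=
        (disjoint_compl_right).mono (Finset.filter_subset _ _)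
          (Finset.filter_subset _ _)
      have h4 : (Finset.univ.filter (· < i)).card = (i : ℕ) := by
        have : Finset.univ.filter (· < i) = Finset.Iio i := by
          ext x; simp
        rw [this, Fin.card_Iio]
      rw [ha, hd, h1, ← h4, ← h2, Finset.card_union_of_disjoint h3]
    rw [smul_smul, smul_smul, ← pow_add, ← pow_add, map_zsmul]
    congr 1
    have : c + d = a + b + 2 * d := by omega
    rw [this]
    simp [pow_add, pow_mul]

end
end

section
/- Let ρ(x,θ) be an even invertible element of A = R[x¹,…,xⁿ]⊗Λ(θ₁,…,θₙ) (numerical part nonzero), and define Δ_ρ f = Δ₀ f + (1/2){log ρ, f} where Δ₀ = Σᵢ∂²/∂xⁱ∂θᵢ. Then Δ_ρ² f = {σ, f} where σ = ρ^{−1/2} Δ₀(ρ^{1/2}); in particular Δ_ρ² = 0 if and only if Δ₀(√ρ) is a constant multiple ν·√ρ with {ν,·} = 0 (ν a constant), and Δ₀(√ρ) = 0 implies Δ_ρ² = 0. -/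
open scoped BigOperators

namespace OddSymp
section Lemmas
variable {R : Type*} [CommRing R] {n : ℕ}

lemma eps_empty_left (T : Finset (Fin n)) : eps ∅ T = 1 := by simp [eps]
lemma eps_empty_right (S : Finset (Fin n)) : eps S ∅ = 1 := by simp [eps]

lemma eps_union_left {S T : Finset (Fin n)} (U : Finset (Fin n)) (h : Disjoint S T) :
    eps (S ∪ T) U = eps S U * eps T U := by
  unfold eps
  rw [← pow_add]
  congr 1
  rw [Finset.union_product, Finset.filter_union, Finset.card_union_of_disjoint]
  exact Finset.disjoint_filter_filter (Finset.disjoint_product.mpr (Or.inl h))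

lemma eps_union_right (S : Finset (Fin n)) {T U : Finset (Fin n)} (h : Disjoint T U) :
    eps S (T ∪ U) = eps S T * eps S U := by
  unfold eps
  rw [← pow_add]
  congr 1
  rw [Finset.product_union, Finset.filter_union, Finset.card_union_of_disjoint]
  exact Finset.disjoint_filter_filter (Finset.disjoint_product.mpr (Or.inr h))

lemma eps_mul_eps {S T : Finset (Fin n)} (h : Disjoint S T) :
    eps S T * eps T S = (-1 : ℤ) ^ (S.card * T.card) := by
  unfold eps
  rw [← pow_add]
  congr 1
  have hswap : ((T ×ˢ S).filter (fun p => p.2 < p.1)).card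
      = ((S ×ˢ T).filter (fun p => p.1 < p.2)).card := by
    apply Finset.card_bij (fun p _ => (p.2, p.1))
    · rintro ⟨a,b⟩ hp
      simp only [Finset.mem_filter, Finset.mem_product] at hp ⊢
      exact ⟨⟨hp.1.2, hp.1.1⟩, hp.2⟩
    · rintro ⟨a,b⟩ hp ⟨c,d⟩ hq hh
      simpa [Prod.ext_iff, and_comm] using hh
    · rintro ⟨a,b⟩ hp
      simp only [Finset.mem_filter, Finset.mem_product] at hp ⊢
      exact ⟨(b,a), ⟨⟨hp.1.2, hp.1.1⟩, hp.2⟩, rfl⟩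
  rw [hswap, ← Finset.card_product S T]
  have hneg : (S ×ˢ T).filter (fun p => p.1 < p.2)
      = (S ×ˢ T).filter (fun p => ¬ p.2 < p.1) := by
    apply Finset.filter_congr
    rintro ⟨a,b⟩ hp
    simp only [Finset.mem_product] at hp
    have hne : a ≠ b := fun hab => (Finset.disjoint_left.mp h hp.1) (hab ▸ hp.2)
    simp only [eq_iff_iff]
    constructor
    · exact fun hlt => not_lt.mpr hlt.le
    · exact fun hnlt => lt_of_le_of_ne (not_lt.mp hnlt) hne
  rw [hneg, Finset.card_filter_add_card_filter_not]

lemma mul_zero_left (g : SAlg R n) : mul (0 : SAlg R n) g = 0 := by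
  funext U; simp [mul]
lemma mul_zero_right (f : SAlg R n) : mul f (0 : SAlg R n) = 0 := by
  funext U; simp [mul]
lemma mul_add_left (f g h : SAlg R n) : mul (f + g) h = mul f h + mul g h := by
  funext U
  simp only [mul, Pi.add_apply, add_mul, smul_add, Finset.sum_add_distrib]
lemma mul_add_right (f g h : SAlg R n) : mul f (g + h) = mul f g + mul f h := by
  funext U
  simp only [mul, Pi.add_apply, mul_add, smul_add, Finset.sum_add_distrib]
lemma mul_smul_left (c : R) (f g : SAlg R n) : mul (c • f) g = c • mul f g := by
  funext U
  simp only [mul, Pi.smul_apply, Finset.smul_sum]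
  refine Finset.sum_congr rfl fun S _ => ?_
  rw [smul_mul_assoc, smul_comm]
lemma mul_smul_right (c : R) (f g : SAlg R n) : mul f (c • g) = c • mul f g := by
  funext U
  simp only [mul, Pi.smul_apply, Finset.smul_sum]
  refine Finset.sum_congr rfl fun S _ => ?_
  rw [mul_smul_comm, smul_comm]
lemma mul_zsmul_left (c : ℤ) (f g : SAlg R n) : mul (c • f) g = c • mul f g := by
  funext U
  simp only [mul, Pi.smul_apply, Finset.smul_sum]
  refine Finset.sum_congr rfl fun S _ => ?_
  rw [smul_mul_assoc, smul_comm]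
lemma mul_zsmul_right (c : ℤ) (f g : SAlg R n) : mul f (c • g) = c • mul f g := by
  funext U
  simp only [mul, Pi.smul_apply, Finset.smul_sum]
  refine Finset.sum_congr rfl fun S _ => ?_
  rw [mul_smul_comm, smul_comm]
lemma mul_neg_right (f g : SAlg R n) : mul f (-g) = -(mul f g) := by
  have := mul_zsmul_right (-1) f g; simpa using this

lemma one_mul' (f : SAlg R n) : mul one f = f := by
  funext U
  rw [mul, Finset.sum_eq_single ∅]
  · simp [one, eps_empty_left]
  · intro S hS hne
    simp [one, hne]
  · intro h; simp at h
lemma mul_one' (f : SAlg R n) : mul f one = f := by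
  funext U
  rw [mul, Finset.sum_eq_single U]
  · simp [one, eps_empty_right]
  · intro S hS hne
    have : U \ S ≠ ∅ := by
      intro h0
      exact hne (Finset.Subset.antisymm (Finset.mem_powerset.mp hS)
        (Finset.sdiff_eq_empty_iff_subset.mp h0))
    simp [one, this]
  · intro h; simp at h

lemma sdiff_sdiff_helper {A S U : Finset (Fin n)} (hAS : A ⊆ S) (_ : S ⊆ U) :
    (U \ A) \ (S \ A) = U \ S := by
  ext a
  simp only [Finset.mem_sdiff]
  constructor
  · rintro ⟨⟨haU, haA⟩, hn⟩
    exact ⟨haU, fun haS => hn ⟨haS, haA⟩⟩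
  · rintro ⟨haU, hnS⟩
    exact ⟨⟨haU, fun haA => hnS (hAS haA)⟩, fun ⟨haS, _⟩ => hnS haS⟩

lemma sdiff_union_sdiff {A S U : Finset (Fin n)} (hAS : A ⊆ S) (hSU : S ⊆ U) :
    (S \ A) ∪ (U \ S) = U \ A := by
  ext a
  simp only [Finset.mem_union, Finset.mem_sdiff]
  constructor
  · rintro (⟨haS, haA⟩ | ⟨haU, haS⟩)
    · exact ⟨hSU haS, haA⟩
    · exact ⟨haU, fun haA => haS (hAS haA)⟩
  · rintro ⟨haU, haA⟩
    by_cases haS : a ∈ S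
    · exact Or.inl ⟨haS, haA⟩
    · exact Or.inr ⟨haU, haS⟩

lemma mul_assoc' (f g h : SAlg R n) : mul (mul f g) h = mul f (mul g h) := by
  funext U
  simp only [mul]
  have L : ∀ S ∈ U.powerset,
      eps S (U \ S) • ((∑ A ∈ S.powerset, eps A (S \ A) • (f A * g (S \ A))) * h (U \ S))
      = ∑ A ∈ S.powerset, (eps S (U \ S) * eps A (S \ A)) • (f A * g (S \ A) * h (U \ S)) := by
    intro S _
    rw [Finset.sum_mul, Finset.smul_sum]
    refine Finset.sum_congr rfl fun A _ => ?_
    rw [smul_mul_assoc, smul_smul]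
  have Rr : ∀ A ∈ U.powerset,
      eps A (U \ A) • (f A * ∑ B ∈ (U \ A).powerset, eps B ((U \ A) \ B) • (g B * h ((U \ A) \ B)))
      = ∑ B ∈ (U \ A).powerset,
          (eps A (U \ A) * eps B ((U \ A) \ B)) • (f A * (g B * h ((U \ A) \ B))) := by
    intro A _
    rw [Finset.mul_sum, Finset.smul_sum]
    refine Finset.sum_congr rfl fun B _ => ?_
    rw [mul_smul_comm, smul_smul]
  rw [Finset.sum_congr rfl L, Finset.sum_congr rfl Rr, Finset.sum_sigma', Finset.sum_sigma']
  refine Finset.sum_bij' (fun x _ => ⟨x.2, x.1 \ x.2⟩) (fun y _ => ⟨y.1 ∪ y.2, y.1⟩)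
    ?_ ?_ ?_ ?_ ?_
  · rintro ⟨S, A⟩ hx
    simp only [Finset.mem_sigma, Finset.mem_powerset] at hx ⊢
    exact ⟨hx.2.trans hx.1, Finset.sdiff_subset_sdiff hx.1 (le_refl _)⟩
  · rintro ⟨A, B⟩ hy
    simp only [Finset.mem_sigma, Finset.mem_powerset] at hy ⊢
    constructor
    · exact Finset.union_subset hy.1 (hy.2.trans (Finset.sdiff_subset))
    · exact Finset.subset_union_left
  · rintro ⟨S, A⟩ hx
    simp only [Finset.mem_sigma, Finset.mem_powerset] at hx
    have : A ∪ (S \ A) = S := Finset.union_sdiff_of_subset hx.2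
    simp [this]
  · rintro ⟨A, B⟩ hy
    simp only [Finset.mem_sigma, Finset.mem_powerset] at hy
    have hd : Disjoint A B := Finset.disjoint_of_subset_right hy.2 Finset.sdiff_disjoint.symm
    have : (A ∪ B) \ A = B := Finset.union_sdiff_cancel_left hd
    simp [this]
  · rintro ⟨S, A⟩ hx
    simp only [Finset.mem_sigma, Finset.mem_powerset] at hx
    obtain ⟨hSU, hAS⟩ := hx
    have hAU : A ⊆ U := hAS.trans hSU
    have e1 : (U \ A) \ (S \ A) = U \ S := sdiff_sdiff_helper hAS hSU
    have e2 : eps S (U \ S) = eps A (U \ S) * eps (S \ A) (U \ S) := by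
      rw [← eps_union_left (U \ S) Finset.disjoint_sdiff, Finset.union_sdiff_of_subset hAS]
    have hdisj : Disjoint (S \ A) (U \ S) :=
      Finset.disjoint_of_subset_left (Finset.sdiff_subset) Finset.sdiff_disjoint.symm
    have e3 : eps A (U \ A) = eps A (S \ A) * eps A (U \ S) := by
      rw [← eps_union_right A hdisj, sdiff_union_sdiff hAS hSU]
    simp only [e1]
    rw [e2, e3, mul_assoc (f A)]
    congr 1
    ring

lemma eps_sq (S T : Finset (Fin n)) : eps S T * eps S T = 1 := by
  unfold eps
  rw [← pow_add]
  exact Even.neg_one_pow ⟨_, rfl⟩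

lemma eps_ne_zero (S T : Finset (Fin n)) : eps S T ≠ 0 := by
  unfold eps
  exact pow_ne_zero _ (by norm_num)

lemma even_mul_comm {g : SAlg R n} (hg : IsHomog g 0) (h : SAlg R n) : mul g h = mul h g := by
  funext U
  rw [mul, mul]
  refine Finset.sum_bij' (fun S _ => U \ S) (fun S _ => U \ S) ?_ ?_ ?_ ?_ ?_
  · intro S hS; exact Finset.mem_powerset.mpr (Finset.sdiff_subset)
  · intro S hS; exact Finset.mem_powerset.mpr (Finset.sdiff_subset)
  · intro S hS; exact Finset.sdiff_sdiff_eq_self (Finset.mem_powerset.mp hS)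
  · intro S hS; exact Finset.sdiff_sdiff_eq_self (Finset.mem_powerset.mp hS)
  · intro S hS
    rw [Finset.sdiff_sdiff_eq_self (Finset.mem_powerset.mp hS)]
    by_cases hz : g S = 0
    · simp [hz]
    · have hcard := hg S hz
      have h1 : eps S (U \ S) * eps (U \ S) S = 1 := by
        rw [eps_mul_eps Finset.sdiff_disjoint.symm]
        exact Even.neg_one_pow ((Nat.even_iff.mpr hcard).mul_right _)
      have h2 : eps (U \ S) S = eps S (U \ S) := by
        rw [← one_mul (eps (U \ S) S), ← eps_sq S (U \ S), mul_assoc, h1, mul_one]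
      rw [h2, mul_comm (g S)]

lemma odd_mul_anticomm {g h : SAlg R n} (hg : IsHomog g 1) (hh : IsHomog h 1) :
    mul g h = - mul h g := by
  funext U
  rw [Pi.neg_apply, mul, mul, ← Finset.sum_neg_distrib]
  refine Finset.sum_bij' (fun S _ => U \ S) (fun S _ => U \ S) ?_ ?_ ?_ ?_ ?_
  · intro S hS; exact Finset.mem_powerset.mpr (Finset.sdiff_subset)
  · intro S hS; exact Finset.mem_powerset.mpr (Finset.sdiff_subset)
  · intro S hS; exact Finset.sdiff_sdiff_eq_self (Finset.mem_powerset.mp hS)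
  · intro S hS; exact Finset.sdiff_sdiff_eq_self (Finset.mem_powerset.mp hS)
  · intro S hS
    rw [Finset.sdiff_sdiff_eq_self (Finset.mem_powerset.mp hS)]
    by_cases hz : g S = 0
    · simp [hz]
    by_cases hz2 : h (U \ S) = 0
    · simp [hz2]
    have hc1 := hg S hz
    have hc2 := hh (U \ S) hz2
    have h1 : eps S (U \ S) * eps (U \ S) S = -1 := by
      rw [eps_mul_eps Finset.sdiff_disjoint.symm]
      exact Odd.neg_one_pow ((Nat.odd_iff.mpr hc1).mul (Nat.odd_iff.mpr hc2))
    have h2 : eps (U \ S) S = - eps S (U \ S) := by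
      rw [← one_mul (eps (U \ S) S), ← eps_sq S (U \ S), mul_assoc, h1, mul_neg_one]
    rw [h2, mul_comm (h (U \ S))]
    simp

lemma mul_isHomog {f g : SAlg R n} {p q : ℕ} (hf : IsHomog f p) (hg : IsHomog g q) :
    IsHomog (mul f g) (p + q) := by
  intro U hU
  rw [mul] at hU
  obtain ⟨S, hS, hterm⟩ := Finset.exists_ne_zero_of_sum_ne_zero hU
  have hfS : f S ≠ 0 := fun h0 => hterm (by simp [h0])
  have hgS : g (U \ S) ≠ 0 := fun h0 => hterm (by simp [h0])
  have h1 := hf S hfS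
  have h2 := hg (U \ S) hgS
  have h3 : (U \ S).card + S.card = U.card :=
    Finset.card_sdiff_add_card_eq_card (Finset.mem_powerset.mp hS)
  omega

/-- number of elements of `X` less than `i` -/
def lo (i : Fin n) (X : Finset (Fin n)) : ℕ := (X.filter (fun x => x < i)).card
/-- number of elements of `X` greater than `i` -/
def hic (i : Fin n) (X : Finset (Fin n)) : ℕ := (X.filter (fun x => i < x)).card

lemma eps_single_left (i : Fin n) (X : Finset (Fin n)) : eps {i} X = (-1 : ℤ) ^ lo i X := by
  unfold eps lo
  congr 1
  rw [Finset.singleton_product, Finset.filter_map, Finset.card_map]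
  rfl

lemma eps_single_right (X : Finset (Fin n)) (i : Fin n) : eps X {i} = (-1 : ℤ) ^ hic i X := by
  unfold eps hic
  congr 1
  rw [Finset.product_singleton, Finset.filter_map, Finset.card_map]
  rfl

lemma eps_insert_left {i : Fin n} {S : Finset (Fin n)} (h : i ∉ S) (X : Finset (Fin n)) :
    eps (insert i S) X = (-1 : ℤ) ^ lo i X * eps S X := by
  rw [Finset.insert_eq, eps_union_left X (Finset.disjoint_singleton_left.mpr h), eps_single_left]

lemma eps_insert_right (S : Finset (Fin n)) {i : Fin n} {X : Finset (Fin n)} (h : i ∉ X) :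
    eps S (insert i X) = (-1 : ℤ) ^ hic i S * eps S X := by
  rw [Finset.insert_eq, eps_union_right S (Finset.disjoint_singleton_left.mpr h),
    eps_single_right]

lemma lo_split {S T : Finset (Fin n)} (h : S ⊆ T) (i : Fin n) :
    lo i T = lo i S + lo i (T \ S) := by
  unfold lo
  rw [← Finset.card_union_of_disjoint, ← Finset.filter_union, Finset.union_sdiff_of_subset h]
  exact Finset.disjoint_filter_filter Finset.disjoint_sdiff

lemma lo_add_hic {i : Fin n} {S : Finset (Fin n)} (h : i ∉ S) :
    lo i S + hic i S = S.card := by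
  unfold lo hic
  have hdisj : Disjoint (S.filter (fun x => x < i)) (S.filter (fun x => i < x)) := by
    rw [Finset.disjoint_left]
    intro x hx hx'
    exact lt_asymm (Finset.mem_filter.mp hx).2 (Finset.mem_filter.mp hx').2
  rw [← Finset.card_union_of_disjoint hdisj]
  congr 1
  ext x
  simp only [Finset.mem_union, Finset.mem_filter]
  constructor
  · rintro (⟨hx, _⟩ | ⟨hx, _⟩) <;> exact hx
  · intro hx
    rcases lt_trichotomy x i with hlt | heq | hgt
    · exact Or.inl ⟨hx, hlt⟩
    · exact absurd (heq ▸ hx) h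
    · exact Or.inr ⟨hx, hgt⟩

lemma lo_insert_ne {i j : Fin n} (hne : i ≠ j) {T : Finset (Fin n)} (hT : i ∉ T) :
    lo j (insert i T) = lo j T + if i < j then 1 else 0 := by
  unfold lo
  rw [Finset.filter_insert]
  by_cases h : i < j
  · rw [if_pos h, if_pos h, Finset.card_insert_of_notMem (fun hc => hT (Finset.mem_filter.mp hc).1)]
  · rw [if_neg h, if_neg h, add_zero]

lemma lo_erase {i : Fin n} (X : Finset (Fin n)) : lo i (X.erase i) = lo i X := by
  unfold lo
  congr 1
  ext x
  simp only [Finset.mem_filter, Finset.mem_erase]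
  exact ⟨fun ⟨⟨_, hx⟩, hlt⟩ => ⟨hx, hlt⟩, fun ⟨hx, hlt⟩ => ⟨⟨ne_of_lt hlt, hx⟩, hlt⟩⟩

lemma pdθ_def' (i : Fin n) (f : SAlg R n) (T : Finset (Fin n)) :
    pdθ i f T = if i ∈ T then 0 else ((-1 : ℤ) ^ lo i T) • f (insert i T) := rfl

open MvPolynomial in
lemma pderiv_comm (i j : Fin n) (p : MvPolynomial (Fin n) R) :
    pderiv i (pderiv j p) = pderiv j (pderiv i p) := by
  induction p using MvPolynomial.induction_on with
  | C a => simp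
  | add p q hp hq => simp [hp, hq]
  | mul_X p k hp =>
    have h1 : ∀ m l : Fin n, pderiv m (pderiv l (X k : MvPolynomial (Fin n) R)) = 0 := by
      intro m l
      by_cases h : k = l
      · subst h; simp
      · rw [pderiv_X_of_ne h]; simp
    simp only [pderiv_mul, map_add, pderiv_mul, hp, h1]
    ring

-- linearity
lemma pdx_add (i : Fin n) (f g : SAlg R n) : pdx i (f + g) = pdx i f + pdx i g := by
  funext S; simp [pdx]
lemma pdx_smul (i : Fin n) (c : R) (f : SAlg R n) : pdx i (c • f) = c • pdx i f := by
  funext S; simp [pdx]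
lemma pdx_zsmul (i : Fin n) (c : ℤ) (f : SAlg R n) : pdx i (c • f) = c • pdx i f := by
  funext S; simp [pdx]
lemma pdx_zero (i : Fin n) : pdx i (0 : SAlg R n) = 0 := by
  funext S; simp [pdx]
lemma pdθ_add (i : Fin n) (f g : SAlg R n) : pdθ i (f + g) = pdθ i f + pdθ i g := by
  funext T; by_cases h : i ∈ T <;> simp [pdθ, h, smul_add]
lemma pdθ_smul (i : Fin n) (c : R) (f : SAlg R n) : pdθ i (c • f) = c • pdθ i f := by
  funext T; by_cases h : i ∈ T <;> simp [pdθ, h, smul_comm]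
lemma pdθ_zsmul (i : Fin n) (c : ℤ) (f : SAlg R n) : pdθ i (c • f) = c • pdθ i f := by
  funext T; by_cases h : i ∈ T <;> simp [pdθ, h] <;> ring
lemma pdθ_zero (i : Fin n) : pdθ i (0 : SAlg R n) = 0 := by
  funext T; by_cases h : i ∈ T <;> simp [pdθ, h]
lemma pdx_sum {ι : Type*} (i : Fin n) (s : Finset ι) (f : ι → SAlg R n) :
    pdx i (∑ k ∈ s, f k) = ∑ k ∈ s, pdx i (f k) := by
  funext S
  simp only [pdx, Finset.sum_apply]
  rw [map_sum]
lemma pdθ_sum {ι : Type*} (i : Fin n) (s : Finset ι) (f : ι → SAlg R n) :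
    pdθ i (∑ k ∈ s, f k) = ∑ k ∈ s, pdθ i (f k) := by
  funext T
  simp only [pdθ, Finset.sum_apply]
  by_cases h : i ∈ T <;> simp [h, Finset.smul_sum]

-- commutation
lemma pdx_pdx (i j : Fin n) (f : SAlg R n) : pdx i (pdx j f) = pdx j (pdx i f) := by
  funext S; simp [pdx, pderiv_comm]
lemma pdx_pdθ (i j : Fin n) (f : SAlg R n) : pdx i (pdθ j f) = pdθ j (pdx i f) := by
  funext T
  by_cases h : j ∈ T <;> simp [pdx, pdθ, h]

lemma pdθ_pdθ (i j : Fin n) (f : SAlg R n) : pdθ i (pdθ j f) = - pdθ j (pdθ i f) := by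
  funext T
  by_cases hi : i ∈ T
  · by_cases hj : j ∈ T <;>
      simp [pdθ_def', hi, hj, Finset.mem_insert]
  by_cases hj : j ∈ T
  · simp [pdθ_def', hi, hj, Finset.mem_insert]
  by_cases hij : i = j
  · subst hij
    simp [pdθ_def', hi, Finset.mem_insert]
  · have h1 : lo j (insert i T) = lo j T + if i < j then 1 else 0 := by
      unfold lo
      rw [Finset.filter_insert]
      by_cases h : i < j
      · rw [if_pos h, if_pos h,
          Finset.card_insert_of_notMem (fun hc => hi (Finset.mem_filter.mp hc).1)]
      · rw [if_neg h, if_neg h, add_zero]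
    have h2 : lo i (insert j T) = lo i T + if j < i then 1 else 0 := by
      unfold lo
      rw [Finset.filter_insert]
      by_cases h : j < i
      · rw [if_pos h, if_pos h,
          Finset.card_insert_of_notMem (fun hc => hj (Finset.mem_filter.mp hc).1)]
      · rw [if_neg h, if_neg h, add_zero]
    have hjii : j ∉ insert i T :=
      fun hc => (Finset.mem_insert.mp hc).elim (fun e => hij e.symm) hj
    have hiji : i ∉ insert j T := fun hc => (Finset.mem_insert.mp hc).elim hij hi
    show (if i ∈ T then 0 else ((-1 : ℤ) ^ lo i T) • pdθ j f (insert i T))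
        = -(if j ∈ T then 0 else ((-1 : ℤ) ^ lo j T) • pdθ i f (insert j T))
    rw [if_neg hi, if_neg hj, pdθ_def', pdθ_def', if_neg hjii, if_neg hiji, h1, h2,
      Finset.insert_comm, smul_smul, smul_smul, ← neg_smul, ← pow_add, ← pow_add]
    congr 1
    rcases lt_trichotomy i j with h | h | h
    · rw [if_pos h, if_neg (asymm h)]
      simp [pow_add, pow_succ]
      ring
    · exact absurd h hij
    · rw [if_neg (asymm h), if_pos h]
      simp [pow_add, pow_succ]
      ring

lemma pdx_mul (i : Fin n) (f g : SAlg R n) :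
    pdx i (mul f g) = mul (pdx i f) g + mul f (pdx i g) := by
  funext U
  simp only [pdx, mul, Pi.add_apply, map_sum, ← Finset.sum_add_distrib]
  refine Finset.sum_congr rfl fun S _ => ?_
  rw [map_zsmul, MvPolynomial.pderiv_mul, smul_add]

lemma pdx_isHomog {f : SAlg R n} {p : ℕ} (hf : IsHomog f p) (i : Fin n) :
    IsHomog (pdx i f) p := by
  intro S hS
  exact hf S (fun h0 => hS (by simp [pdx, h0]))

lemma pdθ_isHomog {f : SAlg R n} {p : ℕ} (hf : IsHomog f p) (i : Fin n) :
    IsHomog (pdθ i f) (p + 1) := by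
  intro T hT
  rw [pdθ_def'] at hT
  by_cases h : i ∈ T
  · simp [h] at hT
  rw [if_neg h] at hT
  have hf' : f (insert i T) ≠ 0 := by
    intro h0; rw [h0] at hT; simp at hT
  have := hf _ hf'
  rw [Finset.card_insert_of_notMem h] at this
  omega

lemma neg_one_pow_parity (a b : ℕ) (h : a % 2 = b % 2) : ((-1 : ℤ)) ^ a = (-1) ^ b := by
  conv_lhs => rw [← Nat.div_add_mod a 2]
  conv_rhs => rw [← Nat.div_add_mod b 2]
  rw [pow_add, pow_add, pow_mul, pow_mul, h]
  norm_num

lemma neg_one_sq' (d : ℕ) : ((-1 : ℤ)) ^ d * (-1) ^ d = 1 := by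
  rw [← pow_add]; exact Even.neg_one_pow ⟨d, rfl⟩

lemma insert_sdiff_of_not_mem' {i : Fin n} {S T : Finset (Fin n)} (hiS : i ∉ S) :
    insert i T \ S = insert i (T \ S) := by
  ext x
  simp only [Finset.mem_sdiff, Finset.mem_insert]
  constructor
  · rintro ⟨hx | hx, hxS⟩
    · exact Or.inl hx
    · exact Or.inr ⟨hx, hxS⟩
  · rintro (rfl | ⟨hx, hxS⟩)
    · exact ⟨Or.inl rfl, hiS⟩
    · exact ⟨Or.inr hx, hxS⟩

lemma insert_sdiff_insert' {i : Fin n} {S T : Finset (Fin n)} (hiT : i ∉ T) :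
    insert i T \ insert i S = T \ S := by
  ext x
  simp only [Finset.mem_sdiff, Finset.mem_insert, not_or]
  constructor
  · rintro ⟨hx | hx, hne, hxS⟩
    · exact absurd hx hne
    · exact ⟨hx, hxS⟩
  · rintro ⟨hx, hxS⟩
    exact ⟨Or.inr hx, fun he => hiT (he ▸ hx), hxS⟩

lemma pdθ_mul {f : SAlg R n} {p : ℕ} (hf : IsHomog f p) (i : Fin n) (g : SAlg R n) :
    pdθ i (mul f g) = mul (pdθ i f) g + ((-1 : ℤ) ^ p) • mul f (pdθ i g) := by
  funext T
  have RHSeq : (mul (pdθ i f) g + ((-1 : ℤ) ^ p) • mul f (pdθ i g)) T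
      = ∑ S ∈ T.powerset, (eps S (T \ S) • (pdθ i f S * g (T \ S))
          + ((-1 : ℤ) ^ p) • (eps S (T \ S) • (f S * pdθ i g (T \ S)))) := by
    simp only [Pi.add_apply, Pi.smul_apply, mul, Finset.smul_sum, Finset.sum_add_distrib]
  rw [RHSeq]
  by_cases hiT : i ∈ T
  · rw [pdθ_def', if_pos hiT]
    symm
    -- key cancellation
    have key : ∀ S ⊆ T, i ∉ S →
        (eps S (T \ S) • (pdθ i f S * g (T \ S))
          + ((-1 : ℤ) ^ p) • (eps S (T \ S) • (f S * pdθ i g (T \ S))))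
        + (eps (insert i S) (T \ insert i S) • (pdθ i f (insert i S) * g (T \ insert i S))
          + ((-1 : ℤ) ^ p) • (eps (insert i S) (T \ insert i S)
              • (f (insert i S) * pdθ i g (T \ insert i S)))) = 0 := by
      intro S hS hiS
      have hiTS : i ∈ T \ S := Finset.mem_sdiff.mpr ⟨hiT, hiS⟩
      have c3 : T \ insert i S = (T \ S).erase i := by
        ext x
        simp only [Finset.mem_sdiff, Finset.mem_insert, Finset.mem_erase, not_or]
        tauto
      have c1 : pdθ i f S = ((-1 : ℤ) ^ lo i S) • f (insert i S) := by
        rw [pdθ_def', if_neg hiS]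
      have c2 : pdθ i g (T \ S) = 0 := by rw [pdθ_def', if_pos hiTS]
      have c4 : pdθ i f (insert i S) = 0 := by
        rw [pdθ_def', if_pos (Finset.mem_insert_self i S)]
      have c5 : pdθ i g ((T \ S).erase i) = ((-1 : ℤ) ^ lo i (T \ S)) • g (T \ S) := by
        rw [pdθ_def', if_neg (Finset.notMem_erase i _), lo_erase,
          Finset.insert_erase hiTS]
      rw [c1, c2, c4, c3, c5]
      by_cases hz : f (insert i S) = 0
      · simp [hz]
      have hcard := hf _ hz
      rw [Finset.card_insert_of_notMem hiS] at hcard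
      have hsplit := lo_add_hic hiS
      -- sign algebra
      have e1 : eps (insert i S) ((T \ S).erase i)
          = (-1 : ℤ) ^ lo i (T \ S) * eps S ((T \ S).erase i) := by
        rw [eps_insert_left hiS, lo_erase]
      have e2 : eps S ((T \ S).erase i) = (-1 : ℤ) ^ hic i S * eps S (T \ S) := by
        have : eps S (T \ S) = (-1 : ℤ) ^ hic i S * eps S ((T \ S).erase i) := by
          conv_lhs => rw [← Finset.insert_erase hiTS]
          exact eps_insert_right S (Finset.notMem_erase i _)
        rw [this, ← mul_assoc, neg_one_sq', one_mul]
      simp only [mul_zero, zero_mul, smul_zero, zero_add, add_zero, mul_smul_comm,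
        smul_mul_assoc, smul_smul, e1, e2]
      rw [← add_smul]
      convert zero_smul ℤ _
      have hc : (-1 : ℤ) ^ lo i S = -((-1 : ℤ) ^ p * (-1 : ℤ) ^ hic i S) := by
        rw [← pow_add]
        have := neg_one_pow_parity (lo i S) (p + hic i S + 1) (by omega)
        rw [this, pow_succ, mul_neg_one]
      linear_combination (eps S (T \ S)) * hc
        + ((-1 : ℤ) ^ p * (-1 : ℤ) ^ hic i S * eps S (T \ S)) * neg_one_sq' (lo i (T \ S))
    apply Finset.sum_involution
      (g := fun S _ => if i ∈ S then S.erase i else insert i S)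
    · intro S hS
      by_cases hiS : i ∈ S
      · simp only [if_pos hiS]
        have := key (S.erase i) ((Finset.erase_subset i S).trans (Finset.mem_powerset.mp hS))
          (Finset.notMem_erase i S)
        rw [Finset.insert_erase hiS] at this
        rw [add_comm]
        exact this
      · simp only [if_neg hiS]
        exact key S (Finset.mem_powerset.mp hS) hiS
    · intro S hS hne
      by_cases hiS : i ∈ S
      · simp only [if_pos hiS]
        exact fun hc => (Finset.notMem_erase i S) (by rw [hc]; exact hiS)
      · simp only [if_neg hiS]
        exact fun hc => hiS (hc ▸ Finset.mem_insert_self i S)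
    · intro S hS
      by_cases hiS : i ∈ S
      · simp [hiS, Finset.notMem_erase, Finset.insert_erase hiS]
      · simp [hiS, Finset.erase_insert hiS]
    · intro S hS
      by_cases hiS : i ∈ S
      · simp only [if_pos hiS]
        exact Finset.mem_powerset.mpr ((Finset.erase_subset i S).trans (Finset.mem_powerset.mp hS))
      · simp only [if_neg hiS]
        exact Finset.mem_powerset.mpr
          (Finset.insert_subset hiT (Finset.mem_powerset.mp hS))
  · -- i ∉ T
    rw [pdθ_def', if_neg hiT]
    show ((-1 : ℤ) ^ lo i T) • (mul f g) (insert i T) = _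
    rw [show (mul f g) (insert i T)
        = ∑ S ∈ (insert i T).powerset, eps S (insert i T \ S) • (f S * g (insert i T \ S))
        from rfl]
    rw [Finset.sum_powerset_insert hiT]
    rw [smul_add, Finset.smul_sum, Finset.smul_sum, add_comm]
    rw [← Finset.sum_add_distrib]
    refine Finset.sum_congr rfl fun S hS => ?_
    have hSsub := Finset.mem_powerset.mp hS
    have hiS : i ∉ S := fun hc => hiT (hSsub hc)
    have hiTS : i ∉ T \ S := fun hc => hiT (Finset.mem_sdiff.mp hc).1
    have comp1 : insert i T \ S = insert i (T \ S) := insert_sdiff_of_not_mem' hiS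
    have comp2 : insert i T \ insert i S = T \ S := insert_sdiff_insert' hiT
    have hlo := lo_split hSsub i
    have hlh := lo_add_hic hiS
    rw [comp1, comp2]
    rw [pdθ_def', if_neg hiS, pdθ_def', if_neg hiTS]
    congr 1
    · -- insert-part ↔ first RHS sum
      rw [eps_insert_left hiS, smul_smul, smul_mul_assoc, smul_smul]
      congr 1
      rw [hlo, pow_add]
      linear_combination ((-1 : ℤ) ^ lo i S * eps S (T \ S)) * neg_one_sq' (lo i (T \ S))
    · -- S-part ↔ second RHS sum
      by_cases hz : f S = 0
      · simp [hz]
      have hcard := hf _ hz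
      rw [eps_insert_right S hiTS, mul_smul_comm, smul_smul, smul_smul, smul_smul]
      congr 1
      have h1 : (-1 : ℤ) ^ lo i S * (-1 : ℤ) ^ hic i S = (-1 : ℤ) ^ p := by
        rw [← pow_add]; exact neg_one_pow_parity _ _ (by omega)
      rw [hlo, pow_add]
      linear_combination ((-1 : ℤ) ^ lo i (T \ S) * eps S (T \ S)) * h1

-- misc helpers
lemma homog_congr {f : SAlg R n} {p q : ℕ} (hf : IsHomog f p) (h : p % 2 = q % 2) :
    IsHomog f q := fun S hS => (hf S hS).trans h

lemma smul_isHomog {f : SAlg R n} {p : ℕ} (hf : IsHomog f p) (c : R) :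
    IsHomog (c • f) p := by
  intro S hS
  exact hf S (fun h0 => hS (by simp [h0]))

lemma sum_isHomog {ι : Type*} {s : Finset ι} {f : ι → SAlg R n} {p : ℕ}
    (hf : ∀ k ∈ s, IsHomog (f k) p) : IsHomog (∑ k ∈ s, f k) p := by
  intro S hS
  rw [Finset.sum_apply] at hS
  obtain ⟨k, hk, hne⟩ := Finset.exists_ne_zero_of_sum_ne_zero hS
  exact hf k hk S hne

lemma pdx_neg (i : Fin n) (f : SAlg R n) : pdx i (-f) = -(pdx i f) := by
  have := pdx_zsmul i (-1) f; simpa using this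
lemma pdθ_neg (i : Fin n) (f : SAlg R n) : pdθ i (-f) = -(pdθ i f) := by
  have := pdθ_zsmul i (-1) f; simpa using this
lemma mul_neg_left (f g : SAlg R n) : mul (-f) g = -(mul f g) := by
  have := mul_zsmul_left (-1) f g; simpa using this

lemma delta0_add (f g : SAlg R n) : delta0 (f + g) = delta0 f + delta0 g := by
  unfold delta0
  rw [← Finset.sum_add_distrib]
  exact Finset.sum_congr rfl fun i _ => by rw [pdθ_add, pdx_add]
lemma delta0_smul (c : R) (f : SAlg R n) : delta0 (c • f) = c • delta0 f := by
  unfold delta0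
  rw [Finset.smul_sum]
  exact Finset.sum_congr rfl fun i _ => by rw [pdθ_smul, pdx_smul]
lemma delta0_zero : delta0 (0 : SAlg R n) = 0 := by
  unfold delta0
  simp [pdθ_zero, pdx_zero]

lemma bracket_add_right (p : ℕ) (l f g : SAlg R n) :
    bracket p l (f + g) = bracket p l f + bracket p l g := by
  unfold bracket
  rw [← Finset.sum_add_distrib]
  refine Finset.sum_congr rfl fun i _ => ?_
  rw [pdθ_add, pdx_add, mul_add_right, mul_add_right, smul_add]
  abel
lemma bracket_smul_right (p : ℕ) (c : R) (l f : SAlg R n) :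
    bracket p l (c • f) = c • bracket p l f := by
  unfold bracket
  rw [Finset.smul_sum]
  refine Finset.sum_congr rfl fun i _ => ?_
  rw [pdθ_smul, pdx_smul, mul_smul_right, mul_smul_right, smul_add, smul_comm c]

-- t is even
lemma t_even {s t : SAlg R n} (hseven : IsHomog s 0)
    (hst : mul s t = one) (hts : mul t s = one) : IsHomog t 0 := by
  classical
  set todd : SAlg R n := fun S => if S.card % 2 = 1 then t S else 0 with htodd
  have hmul : mul s todd = 0 := by
    funext U
    by_cases hU : U.card % 2 = 1
    · have : mul s todd U = mul s t U := by
        rw [mul, mul]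
        refine Finset.sum_congr rfl fun S hS => ?_
        by_cases hz : s S = 0
        · simp [hz]
        have h1 := hseven S hz
        have hcard : (U \ S).card + S.card = U.card :=
          Finset.card_sdiff_add_card_eq_card (Finset.mem_powerset.mp hS)
        have h2 : (U \ S).card % 2 = 1 := by omega
        have : todd (U \ S) = t (U \ S) := by simp only [htodd]; rw [if_pos h2]
        rw [this]
      rw [this, hst]
      have hne : U ≠ ∅ := by
        intro h0
        rw [h0] at hU
        simp at hU
      simp [one, hne]
    · rw [mul]
      have : (0 : SAlg R n) U = 0 := rfl
      rw [this]
      apply Finset.sum_eq_zero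
      intro S hS
      by_cases hz : s S = 0
      · simp [hz]
      have h1 := hseven S hz
      have hcard : (U \ S).card + S.card = U.card :=
        Finset.card_sdiff_add_card_eq_card (Finset.mem_powerset.mp hS)
      have h2 : ¬ ((U \ S).card % 2 = 1) := by omega
      have : todd (U \ S) = 0 := by simp only [htodd]; rw [if_neg h2]
      rw [this]
      simp
  have hzero : todd = 0 := by
    calc todd = mul one todd := (one_mul' todd).symm
    _ = mul (mul t s) todd := by rw [hts]
    _ = mul t (mul s todd) := mul_assoc' t s todd
    _ = mul t 0 := by rw [hmul]
    _ = 0 := mul_zero_right t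
  intro S hS
  have := congrFun hzero S
  simp only [htodd, Pi.zero_apply] at this
  by_cases h : S.card % 2 = 1
  · rw [if_pos h] at this
    exact absurd this hS
  · omega

-- cancellation of antisymmetric double sums (over ℝ)
lemma sum_antisym {n : ℕ} (M : Fin n → Fin n → SAlg ℝ n)
    (h : ∀ i j, M i j = - M j i) : ∑ i : Fin n, ∑ j : Fin n, M i j = 0 := by
  have h2 : (∑ i : Fin n, ∑ j : Fin n, M i j) = - ∑ i : Fin n, ∑ j : Fin n, M i j := by
    conv_lhs => rw [Finset.sum_comm]
    rw [← Finset.sum_neg_distrib]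
    refine Finset.sum_congr rfl fun i _ => ?_
    rw [← Finset.sum_neg_distrib]
    exact Finset.sum_congr rfl fun j _ => h j i
  have h3 : (2 : ℝ) • (∑ i : Fin n, ∑ j : Fin n, M i j) = 0 := by
    rw [two_smul]
    nth_rewrite 1 [h2]
    abel
  have := congrArg (fun x => (2 : ℝ)⁻¹ • x) h3
  simpa [smul_smul] using this

lemma mul_sum_left {ι : Type*} (s : Finset ι) (g : ι → SAlg R n) (h : SAlg R n) :
    mul (∑ k ∈ s, g k) h = ∑ k ∈ s, mul (g k) h := by
  classical
  induction s using Finset.induction_on with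
  | empty => simp [mul_zero_left]
  | insert _ _ hk ih =>
    rw [Finset.sum_insert hk, Finset.sum_insert hk, mul_add_left, ih]

lemma mul_sum_right {ι : Type*} (s : Finset ι) (f : SAlg R n) (g : ι → SAlg R n) :
    mul f (∑ k ∈ s, g k) = ∑ k ∈ s, mul f (g k) := by
  classical
  induction s using Finset.induction_on with
  | empty => simp [mul_zero_right]
  | insert _ _ hk ih =>
    rw [Finset.sum_insert hk, Finset.sum_insert hk, mul_add_right, ih]

lemma delta0_delta0 (f : SAlg ℝ n) : delta0 (delta0 f) = 0 := by
  have expand : delta0 (delta0 f)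
      = ∑ i : Fin n, ∑ j : Fin n, pdx i (pdx j (pdθ i (pdθ j f))) := by
    show (∑ i : Fin n, pdx i (pdθ i (∑ j : Fin n, pdx j (pdθ j f)))) = _
    refine Finset.sum_congr rfl fun i _ => ?_
    rw [pdθ_sum, pdx_sum]
    refine Finset.sum_congr rfl fun j _ => ?_
    rw [← pdx_pdθ j i]
  rw [expand]
  apply sum_antisym
  intro i j
  rw [pdθ_pdθ i j, pdx_neg, pdx_neg, pdx_pdx]

section Main
variable {n : ℕ} (l : SAlg ℝ n)

/-- first-order coefficients of `Δ_ρ²` acting via `∂θ i` -/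
noncomputable def C1 (i : Fin n) : SAlg ℝ n :=
  ∑ j : Fin n, (mul (pdx j l) (pdθ j (pdx i l)) + mul (pdθ j l) (pdx j (pdx i l)))
/-- first-order coefficients of `Δ_ρ²` acting via `∂x i` -/
noncomputable def C2 (i : Fin n) : SAlg ℝ n :=
  ∑ j : Fin n, (mul (pdx j l) (pdθ j (pdθ i l)) + mul (pdθ j l) (pdx j (pdθ i l)))

lemma bracket0_expand (X : SAlg ℝ n) :
    bracket 0 l X = ∑ j : Fin n, (mul (pdx j l) (pdθ j X) + mul (pdθ j l) (pdx j X)) := by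
  simp only [bracket, pow_zero, one_smul]

set_option maxHeartbeats 1600000 in
lemma step_cross (hA : ∀ i, IsHomog (pdx i l) 0) (hB : ∀ i, IsHomog (pdθ i l) 1)
    (f : SAlg ℝ n) :
    delta0 (bracket 0 l f) + bracket 0 l (delta0 f)
      = ∑ i : Fin n,
          (mul (delta0 (pdx i l)) (pdθ i f) + mul (delta0 (pdθ i l)) (pdx i f)) := by
  have neg1 : ((-1 : ℤ) ^ 1) = -1 := by norm_num
  have expand1 : delta0 (bracket 0 l f)
      = ∑ i : Fin n, ∑ j : Fin n,
          pdx j (pdθ j (mul (pdx i l) (pdθ i f) + mul (pdθ i l) (pdx i f))) := by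
    rw [Finset.sum_comm]
    show (∑ j : Fin n, pdx j (pdθ j (bracket 0 l f))) = _
    refine Finset.sum_congr rfl fun j _ => ?_
    rw [bracket0_expand, pdθ_sum, pdx_sum]
  have expand2 : bracket 0 l (delta0 f)
      = ∑ i : Fin n, ∑ j : Fin n,
          (mul (pdx i l) (pdθ i (pdx j (pdθ j f)))
            + mul (pdθ i l) (pdx i (pdx j (pdθ j f)))) := by
    rw [bracket0_expand]
    refine Finset.sum_congr rfl fun i _ => ?_
    show mul (pdx i l) (pdθ i (∑ j : Fin n, pdx j (pdθ j f)))
        + mul (pdθ i l) (pdx i (∑ j : Fin n, pdx j (pdθ j f))) = _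
    rw [pdθ_sum, pdx_sum, mul_sum_right, mul_sum_right, ← Finset.sum_add_distrib]
  rw [expand1, expand2, ← Finset.sum_add_distrib]
  have key : ∀ i : Fin n,
      (∑ j : Fin n, pdx j (pdθ j (mul (pdx i l) (pdθ i f) + mul (pdθ i l) (pdx i f))))
        + ∑ j : Fin n, (mul (pdx i l) (pdθ i (pdx j (pdθ j f)))
            + mul (pdθ i l) (pdx i (pdx j (pdθ j f))))
      = (mul (delta0 (pdx i l)) (pdθ i f) + mul (delta0 (pdθ i l)) (pdx i f))
        + ∑ j : Fin n,
            (mul (pdx j (pdx i l)) (pdθ j (pdθ i f))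
              + mul (pdθ j (pdθ i l)) (pdx j (pdx i f))
              + (mul (pdθ j (pdx i l)) (pdx j (pdθ i f))
                  - mul (pdx j (pdθ i l)) (pdθ j (pdx i f)))) := by
    intro i
    rw [← Finset.sum_add_distrib]
    have hterm : ∀ j : Fin n,
        pdx j (pdθ j (mul (pdx i l) (pdθ i f) + mul (pdθ i l) (pdx i f)))
          + (mul (pdx i l) (pdθ i (pdx j (pdθ j f)))
              + mul (pdθ i l) (pdx i (pdx j (pdθ j f))))
        = (mul (pdx j (pdθ j (pdx i l))) (pdθ i f)
            + mul (pdx j (pdθ j (pdθ i l))) (pdx i f))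
          + (mul (pdx j (pdx i l)) (pdθ j (pdθ i f))
              + mul (pdθ j (pdθ i l)) (pdx j (pdx i f))
              + (mul (pdθ j (pdx i l)) (pdx j (pdθ i f))
                  - mul (pdx j (pdθ i l)) (pdθ j (pdx i f)))) := by
      intro j
      rw [pdθ_add, pdθ_mul (hA i) j, pdθ_mul (hB i) j, pow_zero, one_smul, neg1,
        neg_one_zsmul]
      rw [pdx_add, pdx_add, pdx_add, pdx_neg, pdx_mul, pdx_mul, pdx_mul, pdx_mul]
      -- cancellation pieces
      have z1 : mul (pdx i l) (pdθ i (pdx j (pdθ j f)))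
          = - mul (pdx i l) (pdx j (pdθ j (pdθ i f))) := by
        rw [← pdx_pdθ j i, pdθ_pdθ i j, pdx_neg, mul_neg_right]
      have z2 : mul (pdθ i l) (pdx i (pdx j (pdθ j f)))
          = mul (pdθ i l) (pdx j (pdθ j (pdx i f))) := by
        rw [pdx_pdx i j, ← pdx_pdθ i j]
      rw [z1, z2]
      abel
    rw [Finset.sum_congr rfl fun j _ => hterm j]
    rw [Finset.sum_add_distrib]
    refine congrArg₂ (· + ·) ?_ rfl
    rw [Finset.sum_add_distrib, ← mul_sum_left, ← mul_sum_left]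
    rfl
  rw [Finset.sum_congr rfl fun i _ => key i, Finset.sum_add_distrib]
  have hzero : ∑ i : Fin n, ∑ j : Fin n,
      (mul (pdx j (pdx i l)) (pdθ j (pdθ i f))
        + mul (pdθ j (pdθ i l)) (pdx j (pdx i f))
        + (mul (pdθ j (pdx i l)) (pdx j (pdθ i f))
            - mul (pdx j (pdθ i l)) (pdθ j (pdx i f)))) = 0 := by
    apply sum_antisym
    intro i j
    have a1 : mul (pdx j (pdx i l)) (pdθ j (pdθ i f))
        = - mul (pdx i (pdx j l)) (pdθ i (pdθ j f)) := by
      rw [pdx_pdx j i, pdθ_pdθ j i, mul_neg_right]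
    have a2 : mul (pdθ j (pdθ i l)) (pdx j (pdx i f))
        = - mul (pdθ i (pdθ j l)) (pdx i (pdx j f)) := by
      rw [pdθ_pdθ j i, pdx_pdx j i, mul_neg_left]
    have a3 : mul (pdθ j (pdx i l)) (pdx j (pdθ i f))
        = mul (pdx i (pdθ j l)) (pdθ i (pdx j f)) := by
      rw [← pdx_pdθ i j, ← pdx_pdθ j i]
    have a4 : mul (pdx j (pdθ i l)) (pdθ j (pdx i f))
        = mul (pdθ i (pdx j l)) (pdx i (pdθ j f)) := by
      rw [pdx_pdθ j i, pdx_pdθ i j]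
    rw [a1, a2, a3, a4]
    abel
  rw [hzero, add_zero]

set_option maxHeartbeats 1600000 in
lemma step_Bsq (hA : ∀ i, IsHomog (pdx i l) 0) (hB : ∀ i, IsHomog (pdθ i l) 1)
    (f : SAlg ℝ n) :
    bracket 0 l (bracket 0 l f)
      = ∑ i : Fin n, (mul (C1 l i) (pdθ i f) + mul (C2 l i) (pdx i f)) := by
  have neg1 : ((-1 : ℤ) ^ 1) = -1 := by norm_num
  have expand : bracket 0 l (bracket 0 l f)
      = ∑ i : Fin n, ∑ j : Fin n,
          (mul (pdx j l) (pdθ j (mul (pdx i l) (pdθ i f) + mul (pdθ i l) (pdx i f)))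
            + mul (pdθ j l) (pdx j (mul (pdx i l) (pdθ i f) + mul (pdθ i l) (pdx i f)))) := by
    rw [Finset.sum_comm, bracket0_expand]
    refine Finset.sum_congr rfl fun j _ => ?_
    rw [bracket0_expand, pdθ_sum, pdx_sum, mul_sum_right, mul_sum_right,
      ← Finset.sum_add_distrib]
  rw [expand]
  have key : ∀ i : Fin n,
      (∑ j : Fin n,
          (mul (pdx j l) (pdθ j (mul (pdx i l) (pdθ i f) + mul (pdθ i l) (pdx i f)))
            + mul (pdθ j l) (pdx j (mul (pdx i l) (pdθ i f) + mul (pdθ i l) (pdx i f)))))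
      = (mul (C1 l i) (pdθ i f) + mul (C2 l i) (pdx i f))
        + ∑ j : Fin n,
            (mul (mul (pdx j l) (pdx i l)) (pdθ j (pdθ i f))
              + mul (mul (pdθ j l) (pdθ i l)) (pdx j (pdx i f))
              + (mul (mul (pdθ j l) (pdx i l)) (pdx j (pdθ i f))
                  - mul (mul (pdx j l) (pdθ i l)) (pdθ j (pdx i f)))) := by
    intro i
    have hterm : ∀ j : Fin n,
        mul (pdx j l) (pdθ j (mul (pdx i l) (pdθ i f) + mul (pdθ i l) (pdx i f)))
          + mul (pdθ j l) (pdx j (mul (pdx i l) (pdθ i f) + mul (pdθ i l) (pdx i f)))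
        = ((mul (mul (pdx j l) (pdθ j (pdx i l))) (pdθ i f)
              + mul (mul (pdθ j l) (pdx j (pdx i l))) (pdθ i f))
            + (mul (mul (pdx j l) (pdθ j (pdθ i l))) (pdx i f)
              + mul (mul (pdθ j l) (pdx j (pdθ i l))) (pdx i f)))
          + (mul (mul (pdx j l) (pdx i l)) (pdθ j (pdθ i f))
              + mul (mul (pdθ j l) (pdθ i l)) (pdx j (pdx i f))
              + (mul (mul (pdθ j l) (pdx i l)) (pdx j (pdθ i f))
                  - mul (mul (pdx j l) (pdθ i l)) (pdθ j (pdx i f)))) := by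
      intro j
      rw [pdθ_add, pdθ_mul (hA i) j, pdθ_mul (hB i) j, pow_zero, one_smul, neg1,
        neg_one_zsmul]
      rw [pdx_add, pdx_mul, pdx_mul]
      simp only [mul_add_right, mul_neg_right, ← mul_assoc']
      abel
    rw [Finset.sum_congr rfl fun j _ => hterm j]
    rw [Finset.sum_add_distrib]
    congr 1
    unfold C1 C2
    rw [Finset.sum_add_distrib, mul_sum_left, mul_sum_left, ← Finset.sum_add_distrib,
      ← Finset.sum_add_distrib]
    refine Finset.sum_congr rfl fun j _ => ?_
    rw [mul_add_left, mul_add_left]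
  rw [Finset.sum_congr rfl fun i _ => key i, Finset.sum_add_distrib]
  have hzero : ∑ i : Fin n, ∑ j : Fin n,
      (mul (mul (pdx j l) (pdx i l)) (pdθ j (pdθ i f))
        + mul (mul (pdθ j l) (pdθ i l)) (pdx j (pdx i f))
        + (mul (mul (pdθ j l) (pdx i l)) (pdx j (pdθ i f))
            - mul (mul (pdx j l) (pdθ i l)) (pdθ j (pdx i f)))) = 0 := by
    apply sum_antisym
    intro i j
    have a1 : mul (mul (pdx j l) (pdx i l)) (pdθ j (pdθ i f))
        = - mul (mul (pdx i l) (pdx j l)) (pdθ i (pdθ j f)) := by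
      rw [even_mul_comm (hA j) (pdx i l), pdθ_pdθ j i, mul_neg_right]
    have a2 : mul (mul (pdθ j l) (pdθ i l)) (pdx j (pdx i f))
        = - mul (mul (pdθ i l) (pdθ j l)) (pdx i (pdx j f)) := by
      rw [odd_mul_anticomm (hB j) (hB i), mul_neg_left, pdx_pdx j i]
    have a3 : mul (mul (pdθ j l) (pdx i l)) (pdx j (pdθ i f))
        = mul (mul (pdx i l) (pdθ j l)) (pdθ i (pdx j f)) := by
      rw [← even_mul_comm (hA i) (pdθ j l), ← pdx_pdθ j i]
    have a4 : mul (mul (pdx j l) (pdθ i l)) (pdθ j (pdx i f))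
        = mul (mul (pdθ i l) (pdx j l)) (pdx i (pdθ j f)) := by
      rw [even_mul_comm (hA j) (pdθ i l), pdx_pdθ i j]
    rw [a1, a2, a3, a4]
    abel
  rw [hzero, add_zero]

lemma step_sigma (s t : SAlg ℝ n) (ht0 : IsHomog t 0)
    (hx : ∀ i : Fin n, pdx i s = ((2 : ℝ)⁻¹) • mul (pdx i l) s)
    (hθ : ∀ i : Fin n, pdθ i s = ((2 : ℝ)⁻¹) • mul (pdθ i l) s)
    (hst : mul s t = one) :
    mul t (delta0 s) = (2 : ℝ)⁻¹ • delta0 l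
      + (4 : ℝ)⁻¹ • ∑ j : Fin n, mul (pdθ j l) (pdx j l) := by
  have tcancel : ∀ X : SAlg ℝ n, mul t (mul X s) = X := by
    intro X
    rw [even_mul_comm ht0, mul_assoc', hst, mul_one']
  have hds : delta0 s = ∑ j : Fin n, ((2 : ℝ)⁻¹ • mul (pdx j (pdθ j l)) s
      + (4 : ℝ)⁻¹ • mul (mul (pdθ j l) (pdx j l)) s) := by
    unfold delta0
    refine Finset.sum_congr rfl fun j _ => ?_
    rw [hθ j, pdx_smul, pdx_mul, hx j, mul_smul_right, ← mul_assoc', smul_add, smul_smul]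
    norm_num
  rw [hds, mul_sum_right]
  rw [show (2 : ℝ)⁻¹ • delta0 l = ∑ j : Fin n, (2 : ℝ)⁻¹ • pdx j (pdθ j l) from by
    unfold delta0; rw [Finset.smul_sum]]
  rw [Finset.smul_sum, ← Finset.sum_add_distrib]
  refine Finset.sum_congr rfl fun j _ => ?_
  rw [mul_add_right, mul_smul_right, mul_smul_right, tcancel, tcancel]

lemma step_match1 (hA : ∀ i, IsHomog (pdx i l) 0) (i : Fin n) :
    pdx i ((2 : ℝ)⁻¹ • delta0 l + (4 : ℝ)⁻¹ • ∑ j : Fin n, mul (pdθ j l) (pdx j l))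
      = (2 : ℝ)⁻¹ • delta0 (pdx i l) + (4 : ℝ)⁻¹ • C1 l i := by
  rw [pdx_add, pdx_smul, pdx_smul, pdx_sum]
  congr 1
  · congr 1
    unfold delta0
    rw [pdx_sum]
    refine Finset.sum_congr rfl fun j _ => ?_
    rw [pdx_pdx i j, pdx_pdθ i j]
  · congr 1
    unfold C1
    refine Finset.sum_congr rfl fun j _ => ?_
    rw [pdx_mul, pdx_pdθ i j, ← even_mul_comm (hA j) (pdθ j (pdx i l)), pdx_pdx i j]

lemma step_match2 (hA : ∀ i, IsHomog (pdx i l) 0) (hB : ∀ i, IsHomog (pdθ i l) 1)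
    (i : Fin n) :
    pdθ i ((2 : ℝ)⁻¹ • delta0 l + (4 : ℝ)⁻¹ • ∑ j : Fin n, mul (pdθ j l) (pdx j l))
      = -((2 : ℝ)⁻¹ • delta0 (pdθ i l) + (4 : ℝ)⁻¹ • C2 l i) := by
  rw [pdθ_add, pdθ_smul, pdθ_smul, pdθ_sum]
  have m1 : pdθ i (delta0 l) = -delta0 (pdθ i l) := by
    unfold delta0
    rw [pdθ_sum, ← Finset.sum_neg_distrib]
    refine Finset.sum_congr rfl fun j _ => ?_
    rw [← pdx_pdθ j i, pdθ_pdθ i j, pdx_neg]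
  have m2 : (∑ j : Fin n, pdθ i (mul (pdθ j l) (pdx j l))) = -C2 l i := by
    unfold C2
    rw [← Finset.sum_neg_distrib]
    refine Finset.sum_congr rfl fun j _ => ?_
    rw [pdθ_mul (hB j) i, show ((-1 : ℤ) ^ 1) = -1 from by norm_num, neg_one_zsmul,
      pdθ_pdθ j i, mul_neg_right, pdx_pdθ j i]
    rw [← even_mul_comm (hA j) (pdθ i (pdθ j l))]
    abel
  rw [m1, m2, smul_neg, smul_neg]
  abel

end Main

end Lemmas
end OddSymp

open OddSymp

noncomputable section

/-- The operator `Δ_ρ f = Δ₀ f + (1/2){log ρ, f}`, where `l = log ρ` is even. -/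
def DeltaRho {n : ℕ} (l : SAlg ℝ n) (f : SAlg ℝ n) : SAlg ℝ n :=
  delta0 f + ((2 : ℝ)⁻¹) • bracket 0 l f

set_option maxHeartbeats 1600000 in
lemma part1 {n : ℕ} (l s t : SAlg ℝ n)
    (hseven : IsHomog s 0)
    (hx : ∀ i : Fin n, pdx i s = ((2 : ℝ)⁻¹) • mul (pdx i l) s)
    (hθ : ∀ i : Fin n, pdθ i s = ((2 : ℝ)⁻¹) • mul (pdθ i l) s)
    (hst : mul s t = one) (hts : mul t s = one) (f : SAlg ℝ n) :
    DeltaRho l (DeltaRho l f) = bracket 1 (mul t (delta0 s)) f := by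
  have ht0 : IsHomog t 0 := t_even hseven hst hts
  have hAe : ∀ i, pdx i l = (2 : ℝ) • mul (pdx i s) t := by
    intro i
    have h1 : mul (pdx i s) t = (2 : ℝ)⁻¹ • pdx i l := by
      rw [hx i, mul_smul_left, mul_assoc', hst, mul_one']
    rw [h1, smul_smul]
    norm_num
  have hBe : ∀ i, pdθ i l = (2 : ℝ) • mul (pdθ i s) t := by
    intro i
    have h1 : mul (pdθ i s) t = (2 : ℝ)⁻¹ • pdθ i l := by
      rw [hθ i, mul_smul_left, mul_assoc', hst, mul_one']
    rw [h1, smul_smul]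
    norm_num
  have hA : ∀ i, IsHomog (pdx i l) 0 := by
    intro i
    rw [hAe i]
    exact smul_isHomog (mul_isHomog (pdx_isHomog hseven i) ht0) 2
  have hB : ∀ i, IsHomog (pdθ i l) 1 := by
    intro i
    rw [hBe i]
    exact smul_isHomog (homog_congr (mul_isHomog (pdθ_isHomog hseven i) ht0) rfl) 2
  have exp : DeltaRho l (DeltaRho l f)
      = delta0 (delta0 f) + (2 : ℝ)⁻¹ • (delta0 (bracket 0 l f) + bracket 0 l (delta0 f))
        + (4 : ℝ)⁻¹ • bracket 0 l (bracket 0 l f) := by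
    unfold DeltaRho
    rw [delta0_add, delta0_smul, bracket_add_right, bracket_smul_right, smul_add,
      smul_smul]
    norm_num
    abel
  rw [exp, delta0_delta0, zero_add, step_cross l hA hB f, step_Bsq l hA hB f,
    step_sigma l s t ht0 hx hθ hst]
  have hbr : bracket 1 ((2 : ℝ)⁻¹ • delta0 l
        + (4 : ℝ)⁻¹ • ∑ j : Fin n, mul (pdθ j l) (pdx j l)) f
      = ∑ i : Fin n,
          (mul ((2 : ℝ)⁻¹ • delta0 (pdx i l) + (4 : ℝ)⁻¹ • C1 l i) (pdθ i f)
            + mul ((2 : ℝ)⁻¹ • delta0 (pdθ i l) + (4 : ℝ)⁻¹ • C2 l i) (pdx i f)) := by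
    unfold bracket
    refine Finset.sum_congr rfl fun i _ => ?_
    rw [show ((-1 : ℤ) ^ 1) = -1 from by norm_num, neg_one_zsmul, ← mul_neg_left,
      step_match1 l hA i, step_match2 l hA hB i, neg_neg]
  rw [hbr, Finset.smul_sum, Finset.smul_sum, ← Finset.sum_add_distrib]
  refine Finset.sum_congr rfl fun i _ => ?_
  rw [mul_add_left, mul_add_left, smul_add, smul_add, mul_smul_left, mul_smul_left,
    mul_smul_left, mul_smul_left]
  abel


/-- with `l = log ρ`, `s = √ρ` (even and invertible, with inverse `t`),
the operator `Δ_ρ = Δ₀ + (1/2){l,·}` satisfies `Δ_ρ² f = {σ, f}` where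
`σ = ρ^{−1/2} Δ₀(ρ^{1/2}) = s⁻¹ Δ₀ s`; in particular `Δ_ρ² = 0` iff `Δ₀ s = ν·s`
for a constant `ν` (an element with `{ν,·} = 0`), and `Δ₀ s = 0` implies `Δ_ρ² = 0`.
The hypotheses `hx, hθ` encode the chain rule `∂s = (1/2)(∂ l)·s` relating `√ρ` and
`log ρ`. -/
theorem stmt18 {n : ℕ} (l s t : SAlg ℝ n)
    (hseven : IsHomog s 0)
    (hx : ∀ i : Fin n, pdx i s = ((2 : ℝ)⁻¹) • mul (pdx i l) s)
    (hθ : ∀ i : Fin n, pdθ i s = ((2 : ℝ)⁻¹) • mul (pdθ i l) s)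
    (hst : mul s t = one) (hts : mul t s = one) :
    (∀ f : SAlg ℝ n, DeltaRho l (DeltaRho l f) = bracket 1 (mul t (delta0 s)) f)
    ∧ ((∀ f : SAlg ℝ n, DeltaRho l (DeltaRho l f) = 0) ↔
        ∃ ν : SAlg ℝ n, delta0 s = mul ν s ∧ ∀ g : SAlg ℝ n, bracket 1 ν g = 0)
    ∧ (delta0 s = 0 → ∀ f : SAlg ℝ n, DeltaRho l (DeltaRho l f) = 0) := by
  have ht0 : IsHomog t 0 := t_even hseven hst hts
  have tcancel : ∀ X : SAlg ℝ n, mul t (mul X s) = X := by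
    intro X
    rw [even_mul_comm ht0, mul_assoc', hst, mul_one']
  have hp1 : ∀ f, DeltaRho l (DeltaRho l f) = bracket 1 (mul t (delta0 s)) f :=
    part1 l s t hseven hx hθ hst hts
  have bracket_zero : ∀ f : SAlg ℝ n, bracket 1 (0 : SAlg ℝ n) f = 0 := by
    intro f
    unfold bracket
    apply Finset.sum_eq_zero
    intro i _
    rw [pdx_zero, pdθ_zero, mul_zero_left, mul_zero_left, smul_zero, add_zero]
  refine ⟨hp1, ⟨?_, ?_⟩, ?_⟩
  · intro H
    refine ⟨mul t (delta0 s), ?_, ?_⟩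
    · rw [even_mul_comm ht0 (delta0 s), mul_assoc', hts, mul_one']
    · intro g
      rw [← hp1 g]
      exact H g
  · rintro ⟨ν, hν, hνb⟩ f
    rw [hp1 f, hν, tcancel]
    exact hνb f
  · intro h0 f
    rw [hp1 f, h0, mul_zero_right]
    exact bracket_zero f

end
end

section
/- Let s(x,θ) = ρ(x) + bⁱ(x)θᵢ + … + c·θ₁θ₂⋯θₙ be an element of A = R[x¹,…,xⁿ]⊗Λ(θ₁,…,θₙ) satisfying Δ₀ s = 0, where Δ₀ = Σᵢ∂²/∂xⁱ∂θᵢ. Then the top coefficient c (the coefficient of θ₁⋯θₙ) is annihilated by all ∂/∂xⁱ, i.e. c is a constant. -/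
open scoped BigOperators

open OddSymp in
/-- if `Δ₀ s = 0` then the top coefficient `c` of `s` (the coefficient
of `θ₁θ₂⋯θₙ`, i.e. the value of the coefficient function at `Finset.univ`) is a
constant: all its partial derivatives `∂c/∂xⁱ` vanish. -/
theorem stmt19 {R : Type*} [CommRing R] {n : ℕ} (s : SAlg R n)
    (h : delta0 s = 0) :
    ∀ i : Fin n, MvPolynomial.pderiv i (s Finset.univ) = 0 := by
  intro i
  have h' := congrFun h (Finset.univ \ {i})
  simp only [delta0, Finset.sum_apply, Pi.zero_apply] at h'
  rw [Finset.sum_eq_single i] at h'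
  · simp only [pdx, pdθ, Finset.mem_sdiff, Finset.mem_univ, Finset.mem_singleton,
      true_and, not_not, if_neg (by simp : ¬ i ∈ Finset.univ \ {i})] at h'
    rw [Finset.sdiff_singleton_eq_erase, Finset.insert_erase (Finset.mem_univ i)] at h'
    set k := ((Finset.univ.erase i).filter (fun j => j < i)).card
    have h2 := congrArg (fun x => ((-1:ℤ)^k) • x) h'
    simpa [map_zsmul, smul_smul, ← pow_add, ← two_mul, pow_mul] using h2
  · intro j _ hj
    have hjmem : j ∈ Finset.univ \ {i} := by simp [hj]
    simp [pdx, pdθ, hjmem]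
  · intro hi
    exact absurd (Finset.mem_univ i) (fun _ => hi (Finset.mem_univ i))
end
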